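/- If D is an oriented graph whose underlying undirected graph is the complement of a k-partite graph (i.e., V(D) can be partitioned into k cliques of the underlying graph), then the P3 hull number of D satisfies hn_{P3}(D) ≤ 2k. -/
import Mathlib


/-! Basic machinery for convexity on oriented graphs. -/

/-- A directed walk along the arc relation `A` from `u` to `v`,
recorded as the (nonempty) list of its vertices. Its length is `l.length - 1`. -/
def DiWalk {V : Type*} (A : V → V → Prop) (u v : V) (l : List V) : Prop :=
  l.head? = some u ∧ l.getLast? = some v ∧ l.Chain' A

/-- A shortest directed walk (geodesic) from `u` to `v`:
a directed walk of minimum length among all directed `(u,v)`-walks. -/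
def IsGeodesic {V : Type*} (A : V → V → Prop) (u v : V) (l : List V) : Prop :=
  DiWalk A u v l ∧ ∀ l', DiWalk A u v l' → l.length ≤ l'.length

/-- Geodetic interval: `u`, `v`, and all vertices lying on a shortest directed
`(u,v)`-path or on a shortest directed `(v,u)`-path. -/
def geoInterval {V : Type*} (A : V → V → Prop) (u v : V) : Set V :=
  {u, v} ∪ {w | (∃ l, IsGeodesic A u v l ∧ w ∈ l) ∨ (∃ l, IsGeodesic A v u l ∧ w ∈ l)}

/-- P3 interval: `u`, `v`, and all vertices lying on a directed `(u,v)`- or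
`(v,u)`-path of length two. -/
def p3Interval {V : Type*} (A : V → V → Prop) (u v : V) : Set V :=
  {u, v} ∪ {w | (A u w ∧ A w v) ∨ (A v w ∧ A w u)}

/-- P3* interval: `u`, `v`, and all vertices lying on a shortest directed `(u,v)`- or
`(v,u)`-path of length two (i.e. the corresponding endpoints are not adjacent). -/
def p3sInterval {V : Type*} (A : V → V → Prop) (u v : V) : Set V :=
  {u, v} ∪ {w | (A u w ∧ A w v ∧ ¬ A u v) ∨ (A v w ∧ A w u ∧ ¬ A v u)}

/-- A set is convex for the interval function `I` if it is closed under `I`. -/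
def IsConvexSet {V : Type*} (I : V → V → Set V) (C : Set V) : Prop :=
  ∀ u ∈ C, ∀ v ∈ C, I u v ⊆ C

/-- The convex hull of `S`: the smallest convex set containing `S`. -/
def convexHullD {V : Type*} (I : V → V → Set V) (S : Set V) : Set V :=
  ⋂₀ {C | IsConvexSet I C ∧ S ⊆ C}

/-- `S` is an interval set if applying `I` to pairs of `S` covers all vertices. -/
def IsIntervalSet {V : Type*} (I : V → V → Set V) (S : Set V) : Prop :=
  (⋃ u ∈ S, ⋃ v ∈ S, I u v) = Set.univ

/-- `S` is a hull set if its convex hull is the whole vertex set. -/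
def IsHullSet {V : Type*} (I : V → V → Set V) (S : Set V) : Prop :=
  convexHullD I S = Set.univ

/-- The interval number: minimum cardinality of an interval set. -/
noncomputable def intervalNumber {V : Type*} (I : V → V → Set V) : ℕ :=
  sInf {k | ∃ S : Set V, IsIntervalSet I S ∧ S.ncard = k}

/-- The hull number: minimum cardinality of a hull set. -/
noncomputable def hullNumber {V : Type*} (I : V → V → Set V) : ℕ :=
  sInf {k | ∃ S : Set V, IsHullSet I S ∧ S.ncard = k}

/-- `v` is reachable from `u` by a directed walk. -/
def Reach {V : Type*} (A : V → V → Prop) (u v : V) : Prop :=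
  ∃ l, DiWalk A u v l

/-- An oriented graph: no loops and at most one arc between any two vertices. -/
def IsOriented {V : Type*} (A : V → V → Prop) : Prop :=
  ∀ u v, A u v → ¬ A v u

/-- Strong connectivity. -/
def StronglyConnected {V : Type*} (A : V → V → Prop) : Prop :=
  ∀ u v, Reach A u v

/-- Connectivity of the underlying undirected graph. -/
def ConnectedD {V : Type*} (A : V → V → Prop) : Prop :=
  ∀ u v : V, Reach (fun a b => A a b ∨ A b a) u v

/-- A strong component: an equivalence class of mutual reachability. -/
def IsStrongComponent {V : Type*} (A : V → V → Prop) (C : Set V) : Prop :=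
  ∃ v, C = {u | Reach A u v ∧ Reach A v u}

/-- A sink strong component: a strong component with no arc leaving it. -/
def IsSinkComponent {V : Type*} (A : V → V → Prop) (C : Set V) : Prop :=
  IsStrongComponent A C ∧ ∀ u ∈ C, ∀ w, w ∉ C → ¬ A u w

/-- A source strong component: a strong component with no arc entering it. -/
def IsSourceComponent {V : Type*} (A : V → V → Prop) (C : Set V) : Prop :=
  IsStrongComponent A C ∧ ∀ u ∈ C, ∀ w, w ∉ C → ¬ A w u

/-- The out-section of `u`: all vertices reachable from `u`. -/
def outSection {V : Type*} (A : V → V → Prop) (u : V) : Set V :=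
  {w | Reach A u w}

/-- The in-section of `u`: all vertices from which `u` is reachable. -/
def inSection {V : Type*} (A : V → V → Prop) (u : V) : Set V :=
  {w | Reach A w u}

/-- A tournament: an oriented graph where every two distinct vertices are adjacent. -/
def IsTournament {V : Type*} (A : V → V → Prop) : Prop :=
  (∀ u v, A u v → ¬ A v u) ∧ ∀ u v : V, u ≠ v → A u v ∨ A v u

/-- The number of arcs of the digraph given by `A`. -/
noncomputable def arcCount {V : Type*} (A : V → V → Prop) : ℕ :=
  Nat.card {p : V × V // A p.1 p.2}

theorem subset_hullD {V : Type*} (I : V → V → Set V) (S : Set V) :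
    S ⊆ convexHullD I S :=
  fun _ hx => Set.mem_sInter.mpr fun _ hC => hC.2 hx

theorem hullD_min {V : Type*} (I : V → V → Set V) {S C : Set V}
    (hC : IsConvexSet I C) (hSC : S ⊆ C) : convexHullD I S ⊆ C :=
  fun _ hx => Set.mem_sInter.mp hx C ⟨hC, hSC⟩

theorem hullD_convex {V : Type*} (I : V → V → Set V) (S : Set V) :
    IsConvexSet I (convexHullD I S) := by
  intro u hu v hv w hw
  exact Set.mem_sInter.mpr fun C hC =>
    hC.1 u (Set.mem_sInter.mp hu C hC) v (Set.mem_sInter.mp hv C hC) hw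

theorem hullD_mono {V : Type*} (I : V → V → Set V) {S T : Set V} (h : S ⊆ T) :
    convexHullD I S ⊆ convexHullD I T :=
  hullD_min I (hullD_convex I T) (h.trans (subset_hullD I T))

/-- Every finite tournament-like set has a 2-element "hull seed". -/
theorem tournament_hull_seed {V : Type*} [Finite V] (A : V → V → Prop)
    (hA : IsOriented A) :
    ∀ (n : ℕ) (S : Set V), S.ncard ≤ n →
      (∀ u ∈ S, ∀ v ∈ S, u ≠ v → A u v ∨ A v u) →
      ∃ T : Set V, T ⊆ S ∧ T.ncard ≤ 2 ∧ S ⊆ convexHullD (p3Interval A) T := by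
  intro n
  induction n with
  | zero =>
      intro S hS _
      exact ⟨S, subset_rfl, le_trans hS (by norm_num), subset_hullD _ _⟩
  | succ n ih =>
      intro S hS htour
      by_cases hsmall : S.ncard ≤ 2
      · exact ⟨S, subset_rfl, hsmall, subset_hullD _ _⟩
      -- find w ∈ S with an in-neighbor and an out-neighbor inside S
      have hfin : S.Finite := Set.toFinite S
      have h3 : 2 < S.ncard := lt_of_not_ge hsmall
      have hw : ∃ w ∈ S, (∃ a ∈ S, A a w) ∧ (∃ b ∈ S, A w b) := by
        by_contra hcon
        push_neg at hcon
        obtain ⟨x, y, z, hx, hy, hz, hxy, hxz, hyz⟩ :=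
          (Set.two_lt_ncard_iff hfin).mp h3
        -- each of x, y, z either has no in-neighbor in S or no out-neighbor in S
        have key : ∀ w ∈ S, (∀ a ∈ S, ¬ A a w) ∨ (∀ b ∈ S, ¬ A w b) := by
          intro w hwS
          by_contra hc
          push_neg at hc
          obtain ⟨⟨a, ha, haw⟩, b, hb, hwb⟩ := hc
          exact (hcon w hwS ⟨a, ha, haw⟩) b hb hwb
        -- two of them must be of the same type; contradiction with the tournament arc
        have pair : ∀ u ∈ S, ∀ v ∈ S, u ≠ v →
            ¬ (((∀ a ∈ S, ¬ A a u) ∧ (∀ a ∈ S, ¬ A a v)) ∨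
               ((∀ b ∈ S, ¬ A u b) ∧ (∀ b ∈ S, ¬ A v b))) := by
          intro u hu v hv huv hor
          rcases htour u hu v hv huv with harc | harc
          · rcases hor with ⟨h1, h2⟩ | ⟨h1, h2⟩
            · exact h2 u hu harc
            · exact h1 v hv harc
          · rcases hor with ⟨h1, h2⟩ | ⟨h1, h2⟩
            · exact h1 v hv harc
            · exact h2 u hu harc
        rcases key x hx with kx | kx <;> rcases key y hy with ky | ky <;>
          rcases key z hz with kz | kz
        · exact pair x hx y hy hxy (Or.inl ⟨kx, ky⟩)
        · exact pair x hx y hy hxy (Or.inl ⟨kx, ky⟩)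
        · exact pair x hx z hz hxz (Or.inl ⟨kx, kz⟩)
        · exact pair y hy z hz hyz (Or.inr ⟨ky, kz⟩)
        · exact pair y hy z hz hyz (Or.inl ⟨ky, kz⟩)
        · exact pair x hx z hz hxz (Or.inr ⟨kx, kz⟩)
        · exact pair x hx y hy hxy (Or.inr ⟨kx, ky⟩)
        · exact pair x hx y hy hxy (Or.inr ⟨kx, ky⟩)
      obtain ⟨w, hwS, ⟨a, ha, haw⟩, b, hb, hwb⟩ := hw
      -- remove w and apply the induction hypothesis
      have hcard : (S \ {w}).ncard ≤ n := by
        have := Set.ncard_diff_singleton_add_one hwS hfin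
        omega
      have htour' : ∀ u ∈ S \ {w}, ∀ v ∈ S \ {w}, u ≠ v → A u v ∨ A v u :=
        fun u hu v hv huv => htour u hu.1 v hv.1 huv
      obtain ⟨T, hTsub, hTcard, hThull⟩ := ih (S \ {w}) hcard htour'
      refine ⟨T, hTsub.trans Set.diff_subset, hTcard, ?_⟩
      have haw' : a ∈ S \ {w} := ⟨ha, fun h => hA a w haw (h ▸ haw)⟩
      have hbw' : b ∈ S \ {w} := ⟨hb, fun h => hA w b hwb (h ▸ hwb)⟩
      have hwhull : w ∈ convexHullD (p3Interval A) T := by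
        refine hullD_convex (p3Interval A) T a (hThull haw') b (hThull hbw') ?_
        exact Or.inr (Or.inl ⟨haw, hwb⟩)
      intro x hxS
      by_cases hxw : x = w
      · exact hxw ▸ hwhull
      · exact hThull ⟨hxS, hxw⟩

/-- If the underlying graph of an oriented graph `D` is the
complement of a `k`-partite graph (its vertex set is partitioned into `k`
cliques, given by the fibers of `f`), then `hn_{P3}(D) ≤ 2k`. -/
theorem stmt_14 {V : Type*} [Finite V] (A : V → V → Prop) (hA : IsOriented A)
    (k : ℕ) (f : V → Fin k)
    (hclique : ∀ u v : V, f u = f v → u ≠ v → A u v ∨ A v u) :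
    hullNumber (p3Interval A) ≤ 2 * k := by
  classical
  -- for each fiber pick a hull seed of size ≤ 2
  have hseed : ∀ i : Fin k, ∃ T : Set V, T ⊆ f ⁻¹' {i} ∧ T.ncard ≤ 2 ∧
      f ⁻¹' {i} ⊆ convexHullD (p3Interval A) T := by
    intro i
    refine tournament_hull_seed A hA (f ⁻¹' {i}).ncard (f ⁻¹' {i}) le_rfl ?_
    intro u hu v hv huv
    simp only [Set.mem_preimage, Set.mem_singleton_iff] at hu hv
    exact hclique u v (hu.trans hv.symm) huv
  choose T hTsub hTcard hThull using hseed
  set S : Set V := ⋃ i, T i with hSdef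
  -- S is a hull set
  have hhull : IsHullSet (p3Interval A) S := by
    rw [IsHullSet, Set.eq_univ_iff_forall]
    intro x
    have : x ∈ f ⁻¹' {f x} := by simp
    exact hullD_mono (p3Interval A) (Set.subset_iUnion T (f x)) (hThull (f x) this)
  -- cardinality bound
  have hcard : S.ncard ≤ 2 * k := by
    have hfinT : ∀ i, (T i).Finite := fun i => Set.toFinite _
    have hcoe : S = ↑(Finset.univ.biUnion fun i : Fin k => (hfinT i).toFinset) := by
      ext x
      simp [hSdef, Set.Finite.mem_toFinset]
    rw [hcoe, Set.ncard_coe_finset]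
    calc (Finset.univ.biUnion fun i : Fin k => (hfinT i).toFinset).card
        ≤ ∑ i : Fin k, ((hfinT i).toFinset).card := Finset.card_biUnion_le
      _ ≤ ∑ _i : Fin k, 2 := by
          refine Finset.sum_le_sum fun i _ => ?_
          rw [← Set.ncard_eq_toFinset_card _ (hfinT i)]
          exact hTcard i
      _ = 2 * k := by simp [Finset.sum_const, mul_comm]
  have hmem : S.ncard ∈ {m | ∃ S' : Set V, IsHullSet (p3Interval A) S' ∧ S'.ncard = m} :=
    ⟨S, hhull, rfl⟩
  exact le_trans (Nat.sInf_le hmem) hcard
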